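/- For the split chain of a family of Markov chains satisfying the uniform minorization condition inf_θ P^θ(x,A) ≥ 2δ·1_C(x)·ν(A) with ν(C)=1 and 0<δ<1/2, the atom α = C_1 = C×{1} satisfies: P̌^θ(x̌, α) ≥ δ²/(1−δ) for every x̌ ∈ C_0 ∪ C_1 and every parameter θ. -/
import Mathlib


open MeasureTheory ProbabilityTheory

variable {X : Type*} [MeasurableSpace X]

/-- The splitting `λ*` of a measure `λ` on `X`:
`λ*(A₀) = (1−δ)λ(A∩C) + λ(A∩Cᶜ)`, `λ*(A₁) = δλ(A∩C)`. -/
noncomputable def splitMeasure (C : Set X) (δ : ℝ) (μ0 : Measure X) :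
    Measure (X × Bool) :=
  Measure.map (fun x => (x, false))
      (ENNReal.ofReal (1 - δ) • μ0.restrict C + μ0.restrict Cᶜ)
    + Measure.map (fun x => (x, true)) (ENNReal.ofReal δ • μ0.restrict C)

open Classical in
/-- The kernel `Q` of the split-chain construction. -/
noncomputable def splitQ (P : Kernel X X) (ν : Measure X) (C : Set X) (δ : ℝ)
    (xs : X × Bool) : Measure X :=
  if xs.2 = true then ν
  else if xs.1 ∈ C then
    (ENNReal.ofReal (1 - δ))⁻¹ • ((P xs.1) - ENNReal.ofReal δ • ν)
  else P xs.1

/-- The split (Nummelin) transition kernel `P̌(xs,·) = Q(xs,·)*`. -/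
noncomputable def splitKernel (P : Kernel X X) (ν : Measure X) (C : Set X)
    (δ : ℝ) (xs : X × Bool) : Measure (X × Bool) :=
  splitMeasure C δ (splitQ P ν C δ xs)

lemma splitMeasure_atom (C : Set X) (hC : MeasurableSet C) (δ : ℝ) (μ0 : Measure X) :
    splitMeasure C δ μ0 (C ×ˢ {true}) = ENNReal.ofReal δ * μ0 C := by
  have hm : MeasurableSet (C ×ˢ ({true} : Set Bool)) := hC.prod (by simp)
  rw [splitMeasure, Measure.add_apply,
    Measure.map_apply measurable_prodMk_right hm,
    Measure.map_apply measurable_prodMk_right hm]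
  have h1 : (fun x => (x, false)) ⁻¹' (C ×ˢ {true}) = ∅ := by ext x; simp
  have h2 : (fun x => (x, true)) ⁻¹' (C ×ˢ {true}) = C := by ext x; simp
  rw [h1, h2]
  simp [Measure.restrict_apply_self]

/-- under the uniform minorization condition, the atom
`α = C×{1}` of the split chain satisfies `P̌^θ(xs, α) ≥ δ²/(1−δ)` for every
`xs ∈ C₀ ∪ C₁` and every parameter `θ`. -/
theorem split_atom_uniform_minorization
    {Θ : Type*} (P : Θ → Kernel X X) [∀ θ, IsMarkovKernel (P θ)]
    (C : Set X) (hC : MeasurableSet C)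
    (ν : Measure X) [IsProbabilityMeasure ν] (hνC : ν C = 1)
    (δ : ℝ) (hδ0 : 0 < δ) (hδ : δ < 1 / 2)
    (hminor : ∀ θ, ∀ x, ∀ A : Set X, MeasurableSet A →
      ENNReal.ofReal (2 * δ) * C.indicator 1 x * ν A ≤ (P θ) x A) :
    ∀ θ, ∀ xs ∈ C ×ˢ {false} ∪ C ×ˢ ({true} : Set Bool),
      ENNReal.ofReal (δ ^ 2 / (1 - δ))
        ≤ splitKernel (P θ) ν C δ xs (C ×ˢ {true}) := by
  intro θ xs hxs
  have h1δ : (0:ℝ) < 1 - δ := by linarith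
  rw [splitKernel, splitMeasure_atom C hC]
  have hkey : ENNReal.ofReal (δ ^ 2 / (1 - δ))
      = ENNReal.ofReal δ * ((ENNReal.ofReal (1 - δ))⁻¹ * ENNReal.ofReal δ) := by
    rw [ENNReal.ofReal_div_of_pos h1δ, div_eq_mul_inv, sq, ENNReal.ofReal_mul hδ0.le]
    ring
  rcases hxs with ⟨hxC, hxb⟩ | ⟨hxC, hxb⟩
  · -- xs = (x, false), x ∈ C
    simp only [Set.mem_singleton_iff] at hxb
    rw [splitQ, hxb]
    simp only [Bool.false_eq_true, if_false, if_pos hxC]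
    have hle : ENNReal.ofReal δ • ν ≤ (P θ) xs.1 := by
      refine Measure.le_iff.2 fun s hs => ?_
      calc (ENNReal.ofReal δ • ν) s = ENNReal.ofReal δ * ν s := rfl
        _ ≤ ENNReal.ofReal (2 * δ) * C.indicator 1 xs.1 * ν s := by
            rw [Set.indicator_of_mem hxC]
            simp only [Pi.one_apply, mul_one]
            exact mul_le_mul_left (ENNReal.ofReal_le_ofReal (by linarith)) _
        _ ≤ (P θ) xs.1 s := hminor θ xs.1 s hs
    haveI : IsFiniteMeasure (ENNReal.ofReal δ • ν) :=
      ⟨ENNReal.mul_lt_top ENNReal.ofReal_lt_top (measure_lt_top ν _)⟩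
    rw [Measure.smul_apply, Measure.sub_apply hC hle, smul_eq_mul]
    rw [hkey]
    refine mul_le_mul_right (mul_le_mul_right ?_ _) _
    have hP : ENNReal.ofReal (2 * δ) ≤ (P θ) xs.1 C := by
      have := hminor θ xs.1 C hC
      rwa [Set.indicator_of_mem hxC, hνC, Pi.one_apply, mul_one, mul_one] at this
    calc ENNReal.ofReal δ
        = ENNReal.ofReal (2 * δ) - ENNReal.ofReal δ := by
          rw [← ENNReal.ofReal_sub _ hδ0.le]; congr 1; ring
      _ ≤ (P θ) xs.1 C - (ENNReal.ofReal δ • ν) C := by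
          refine tsub_le_tsub hP ?_
          simp [hνC]
  · -- xs = (x, true)
    simp only [Set.mem_singleton_iff] at hxb
    rw [splitQ, if_pos hxb, hνC, mul_one]
    refine ENNReal.ofReal_le_ofReal ?_
    rw [div_le_iff₀ h1δ]
    nlinarith
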